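/- For every infinite cardinal λ there exists a family F of 2^λ functions from λ onto λ that is independent: for every finite collection of distinct f₀,…,f_{n−1} ∈ F and every choice of values j₀,…,j_{n−1} < λ, the set {η < λ : f_i(η) = j_i for all i < n} is nonempty. -/
import Mathlib

open Cardinal Function

universe u

namespace EKaux

open scoped Classical

variable {I : Type u} [Infinite I]

/-- Domain for the Engelking–Karłowicz construction. -/
abbrev D (I : Type u) := Σ u : Finset I, (({x // x ∈ u} → Bool) → I)

noncomputable def f (A : Set I) (d : D I) : I :=
  d.2 (fun x => decide ((x : I) ∈ A))

omit [Infinite I] in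
lemma f_surj (A : Set I) : Surjective (f (I := I) A) :=
  fun i => ⟨⟨∅, fun _ => i⟩, rfl⟩

lemma indep (s : Finset (Set I)) (j : Set I → I) :
    ∃ d : D I, ∀ A ∈ s, f A d = j A := by
  classical
  -- separating points
  have sep : ∀ A B : Set I, A ≠ B → ∃ x, ¬ (x ∈ A ↔ x ∈ B) := by
    intro A B hAB
    by_contra h
    push_neg at h
    exact hAB (Set.ext h)
  set w : Set I → Set I → I := fun A B =>
    if h : ∃ x, ¬ (x ∈ A ↔ x ∈ B) then h.choose else Classical.arbitrary I with hw
  set u : Finset I := (s ×ˢ s).image (fun p => w p.1 p.2) with hu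
  set χ : Set I → ({x // x ∈ u} → Bool) := fun A x => decide ((x : I) ∈ A) with hχ
  have inj : ∀ A ∈ s, ∀ B ∈ s, χ A = χ B → A = B := by
    intro A hA B hB hABχ
    by_contra hAB
    have hex := sep A B hAB
    have hx : w A B = hex.choose := by rw [hw]; simp [dif_pos hex]
    have hxu : w A B ∈ u := by
      rw [hu]
      exact Finset.mem_image.mpr ⟨(A, B), Finset.mem_product.mpr ⟨hA, hB⟩, rfl⟩
    have := congrFun hABχ ⟨w A B, hxu⟩
    rw [hχ] at this
    simp only [decide_eq_decide] at this
    rw [hx] at this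
    exact hex.choose_spec this
  set e : ({x // x ∈ u} → Bool) → I := fun c =>
    if h : ∃ A, A ∈ s ∧ χ A = c then j h.choose else Classical.arbitrary I with he
  refine ⟨⟨u, e⟩, ?_⟩
  intro A hA
  have hfa : f A ⟨u, e⟩ = e (χ A) := rfl
  have hex : ∃ B, B ∈ s ∧ χ B = χ A := ⟨A, hA, rfl⟩
  rw [hfa, he]
  simp only [dif_pos hex]
  have hspec := hex.choose_spec
  rw [inj _ hspec.1 _ hA hspec.2]

lemma f_inj : Injective (f (I := I)) := by
  intro A B hAB
  by_contra hne
  obtain ⟨a, b, hab⟩ := exists_pair_ne I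
  classical
  obtain ⟨d, hd⟩ := indep {A, B} (fun X => if X = A then a else b)
  have h1 : f A d = a := by simpa using hd A (by simp)
  have h2 : f B d = b := by
    have := hd B (by simp)
    simpa [if_neg (Ne.symm hne)] using this
  rw [hAB, h2] at h1
  exact hab h1.symm

lemma mk_D : #(D I) = #I := by
  apply le_antisymm
  · have hfib : ∀ u : Finset I, #(({x // x ∈ u} → Bool) → I) = #I := by
      intro u
      rw [Cardinal.mk_arrow]
      rw [Cardinal.mk_fintype ({x // x ∈ u} → Bool)]
      simp only [Cardinal.lift_natCast, Cardinal.lift_id]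
      exact Cardinal.power_nat_eq (Cardinal.aleph0_le_mk I)
        (Nat.one_le_iff_ne_zero.mpr (by positivity))
    calc #(D I) = Cardinal.sum (fun u : Finset I => #(({x // x ∈ u} → Bool) → I)) :=
          Cardinal.mk_sigma _
      _ = Cardinal.sum (fun _ : Finset I => #I) := by
          congr 1; funext u; exact hfib u
      _ = #(Finset I) * #I := Cardinal.sum_const' _ _
      _ = #I * #I := by rw [Cardinal.mk_finset_of_infinite]
      _ = #I := Cardinal.mul_eq_self (Cardinal.aleph0_le_mk I)
      _ ≤ #I := le_rfl
  · exact Cardinal.mk_le_of_injective (f := fun i : I => (⟨∅, fun _ => i⟩ : D I))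
      (fun i i' h => congrArg (f ∅) h)

end EKaux

universe v

/-- **Engelking–Karłowicz theorem (independent families).**
For every infinite cardinal `λ` (here represented by an infinite type `I` of that
cardinality) there is a family `F` of `2 ^ λ` functions from `λ` onto `λ` which is
independent: every finite system of constraints `f η = j f`, for distinct `f ∈ F`
and arbitrary prescribed values `j f`, has a solution `η`. -/
theorem engelking_karlowicz_independent_family {I : Type u} [Infinite I] :
    ∃ F : Set (I → I),
      Cardinal.mk F = 2 ^ Cardinal.mk I ∧
      (∀ f ∈ F, Function.Surjective f) ∧
      ∀ s : Finset (I → I), ↑s ⊆ F → ∀ j : (I → I) → I,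
        ∃ η : I, ∀ f ∈ s, f η = j f := by
  classical
  obtain ⟨eqv⟩ := Cardinal.eq.mp (EKaux.mk_D (I := I))
  set g : Set I → (I → I) := fun A => EKaux.f A ∘ eqv.symm with hg
  have g_inj : Function.Injective g := by
    intro A B h
    apply EKaux.f_inj
    funext d
    have := congrFun h (eqv d)
    simpa [hg] using this
  refine ⟨Set.range g, ?_, ?_, ?_⟩
  · rw [Cardinal.mk_range_eq _ g_inj, Cardinal.mk_set]
  · rintro f' ⟨A, rfl⟩
    exact (EKaux.f_surj A).comp eqv.symm.surjective
  · intro s hs j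
    set Af : (I → I) → Set I := fun f' =>
      if h : ∃ A, g A = f' then h.choose else ∅ with hAf
    have hAg : ∀ f' ∈ s, g (Af f') = f' := by
      intro f' hf'
      have h : ∃ A, g A = f' := hs hf'
      rw [hAf]
      simp only [dif_pos h]
      exact h.choose_spec
    obtain ⟨d, hd⟩ := EKaux.indep (s.image Af) (fun A => j (g A))
    refine ⟨eqv d, ?_⟩
    intro f' hf'
    have h1 : EKaux.f (Af f') d = j (g (Af f')) :=
      hd _ (Finset.mem_image_of_mem _ hf')
    calc f' (eqv d) = g (Af f') (eqv d) := by rw [hAg f' hf']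
      _ = EKaux.f (Af f') d := by simp [hg]
      _ = j (g (Af f')) := h1
      _ = j f' := by rw [hAg f' hf']
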